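/- For a discrete space X, the socle C_F(X) = {f ∈ C(X) : coz(f) is finite} is a countable strongly annihilated ideal of C(X) if and only if X is finite. -/
import Mathlib


open ContinuousMap

/-- An ideal `I` is countable strongly annihilated if for each countable subset `S ⊆ I`
and each `b ∉ I` there exists `c` with `c * a = 0` for all `a ∈ S` but `c * b ≠ 0`. -/
def CountableStronglyAnnihilated {R : Type*} [CommRing R] (I : Ideal R) : Prop :=
  ∀ S : Set R, S.Countable → S ⊆ I → ∀ b ∉ I, ∃ c : R, (∀ a ∈ S, c * a = 0) ∧ c * b ≠ 0

/-- The socle `C_F(X) = {f ∈ C(X) : coz(f) is finite}`. -/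
def CF (X : Type*) [TopologicalSpace X] : Ideal C(X, ℝ) where
  carrier := {f | {x | f x ≠ 0}.Finite}
  zero_mem' := by simp
  add_mem' := by
    intro f g hf hg
    refine (hf.union hg).subset ?_
    intro x hx
    by_contra hx'
    simp only [Set.mem_union, Set.mem_setOf_eq, not_or, not_not] at hx'
    apply hx
    simp [hx'.1, hx'.2]
  smul_mem' := by
    intro c f hf
    refine hf.subset ?_
    intro x hx
    simp only [Set.mem_setOf_eq] at *
    intro h
    exact hx (by simp [h])

/-- For a discrete space `X`, the socle `C_F(X)` is a countable strongly annihilated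
ideal of `C(X)` iff `X` is finite. -/
theorem stmt19 {X : Type*} [TopologicalSpace X] [DiscreteTopology X] :
    CountableStronglyAnnihilated (CF X) ↔ Finite X := by
  classical
  constructor
  · intro h
    by_contra hfin
    rw [not_finite_iff_infinite] at hfin
    let e := Infinite.natEmbedding X
    let chi : X → C(X, ℝ) := fun d => ⟨fun x => if x = d then 1 else 0,
      continuous_of_discreteTopology⟩
    let b : C(X, ℝ) := ⟨fun x => if x ∈ Set.range e then 1 else 0,
      continuous_of_discreteTopology⟩
    have hchi : ∀ d : X, chi d ∈ CF X := by
      intro d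
      show Set.Finite _
      refine (Set.finite_singleton d).subset ?_
      intro x hx
      simp only [Set.mem_setOf_eq, chi, ContinuousMap.coe_mk] at hx
      by_contra hxd
      simp only [Set.mem_singleton_iff] at hxd
      exact hx (if_neg hxd)
    have hbmem : b ∉ CF X := by
      intro hb
      have hsub : Set.range e ⊆ {x | b x ≠ 0} := by
        intro x hx
        simp only [Set.mem_setOf_eq, b, ContinuousMap.coe_mk, if_pos hx]
        exact one_ne_zero
      have hfin' : Set.Finite {x | b x ≠ 0} := hb
      exact Set.infinite_range_of_injective e.injective (hfin'.subset hsub)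
    obtain ⟨c, hc1, hc2⟩ := h (Set.range fun n => chi (e n)) (Set.countable_range _)
      (by rintro _ ⟨n, rfl⟩; exact hchi (e n)) b hbmem
    apply hc2
    ext x
    simp only [ContinuousMap.mul_apply, ContinuousMap.zero_apply]
    by_cases hx : x ∈ Set.range e
    · obtain ⟨n, rfl⟩ := hx
      have h0 := hc1 (chi (e n)) ⟨n, rfl⟩
      have h1 : c (e n) * chi (e n) (e n) = 0 :=
        congrFun (congrArg DFunLike.coe h0) (e n)
      simp only [chi, ContinuousMap.coe_mk, if_pos rfl, if_true, mul_one] at h1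
      rw [h1, zero_mul]
    · simp only [b, ContinuousMap.coe_mk, if_neg hx, mul_zero]
  · intro h S hSc hSI b hb
    exact absurd (Set.toFinite {x | b x ≠ 0} : b ∈ CF X) hb
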